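/- For every ω̂ ∈ D and every n ≥ 1, the Birkhoff sums of the roof function have the closed form S_n(ψ)(ω̂) = log( (q_{ν_n} + p_{ν_n}·x) / (2k₁ + x) ), where p_i = p_i(ω̂⁺), q_i = q_i(ω̂⁺) are the ECF convergent numerators and denominators of ω̂⁺, ν_n = ν_n(ω̂), k₁ = k₁(ω̂), and x = x(ω̂) := y₁(ω̂) − 2k₁(ω̂) ∈ (−1/3, 1] is the backward value of ω̂. -/

import Mathlib

open MeasureTheory Filter

noncomputable section

/-- The alphabet `Σ = ℕ₀ × ((ℕ × {±1}) ∖ {(1,-1)})`, as a subset of `ℕ × (ℕ × ℤ)`. -/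
def SigmaSymb : Set (ℕ × (ℕ × ℤ)) :=
  {s | 1 ≤ s.2.1 ∧ ((s.2.2 = 1 ∨ s.2.2 = -1) ∧ ¬(s.2.1 = 1 ∧ s.2.2 = -1))}

/-- The space `D = Σ^ℤ` of bi-infinite sequences of symbols. -/
def DSpace : Type := {ω : ℤ → ℕ × (ℕ × ℤ) // ∀ n, ω n ∈ SigmaSymb}

/-- `h`-component of the `n`-th symbol. -/
def hF (ω : DSpace) (n : ℤ) : ℕ := (ω.1 n).1

/-- `m`-component of the `n`-th symbol. -/
def mF (ω : DSpace) (n : ℤ) : ℕ := (ω.1 n).2.1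

/-- sign component of the `n`-th symbol. -/
def eF (ω : DSpace) (n : ℤ) : ℤ := (ω.1 n).2.2

/-- `ν_0 = 1`, `ν_n = ν_{n-1} + h_n + 1`, extended to all of `ℤ`. -/
def nuF (ω : DSpace) (n : ℤ) : ℤ :=
  if 0 ≤ n then 1 + ∑ j ∈ Finset.Icc 1 n.toNat, ((hF ω j : ℤ) + 1)
  else 1 - ∑ j ∈ Finset.range (-n).toNat, ((hF ω (-(j : ℤ)) : ℤ) + 1)

open Classical in
/-- Decoded digit `k_i(ω̂)`: symbol `σ_n` occupies digit indices `ν_{n-1}, …, ν_n - 1`,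
as `h_n` copies of `(1,-1)` followed by `(m_n, ε_n)`. -/
def kF (ω : DSpace) (i : ℤ) : ℕ :=
  if h : ∃ n : ℤ, nuF ω n - 1 = i then mF ω h.choose else 1

open Classical in
/-- Decoded digit `ξ_i(ω̂)`. -/
def xiF (ω : DSpace) (i : ℤ) : ℤ :=
  if h : ∃ n : ℤ, nuF ω n - 1 = i then eF ω h.choose else -1

/-- The finite backward continued fractions
`2k_i + ξ_{i-1}/(2k_{i-1} + ⋯ + ξ_{i-r}/(2k_{i-r}))`. -/
def backCF (k : ℤ → ℕ) (ξ : ℤ → ℤ) : ℕ → ℤ → ℝ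
  | 0, i => 2 * (k i : ℝ)
  | (r+1), i => 2 * (k i : ℝ) + (ξ (i-1) : ℝ) / backCF k ξ r (i-1)

/-- `y_i(ω̂)`, the limit of the finite backward continued fractions. -/
def yF (ω : DSpace) (i : ℤ) : ℝ :=
  limUnder atTop (fun r => backCF (kF ω) (xiF ω) r i)

/-- The roof function `ψ(ω̂) = ∑_{i=2}^{ν₁(ω̂)} log y_i(ω̂)`. -/
def psiF (ω : DSpace) : ℝ := ∑ i ∈ Finset.Icc (2:ℤ) (nuF ω 1), Real.log (yF ω i)

/-- The invertible left shift `R̂` on `D`. -/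
def shiftD (ω : DSpace) : DSpace := ⟨fun n => ω.1 (n+1), fun n => ω.2 (n+1)⟩

/-- Birkhoff sums `S_n(ψ)(ω̂) = ∑_{j=0}^{n-1} ψ(R̂^j ω̂)`. -/
def birkhoffPsi (ω : DSpace) (n : ℕ) : ℝ := ∑ j ∈ Finset.range n, psiF (shiftD^[j] ω)

/-- Numerators `p_n = 2 k_n p_{n-1} + ξ_{n-1} p_{n-2}`, `p_0 = 0`, `p_{-1} = 1`. -/
def cfP (k : ℕ → ℕ) (ξ : ℕ → ℤ) : ℕ → ℤ
  | 0 => 0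
  | 1 => ξ 0
  | (n+2) => 2 * (k (n+2) : ℤ) * cfP k ξ (n+1) + ξ (n+1) * cfP k ξ n

/-- Denominators `q_n = 2 k_n q_{n-1} + ξ_{n-1} q_{n-2}`, `q_0 = 1`, `q_{-1} = 0`. -/
def cfQ (k : ℕ → ℕ) (ξ : ℕ → ℤ) : ℕ → ℤ
  | 0 => 1
  | 1 => 2 * (k 1 : ℤ)
  | (n+2) => 2 * (k (n+2) : ℤ) * cfQ k ξ (n+1) + ξ (n+1) * cfQ k ξ n

/-- Forward digit sequence of `ω̂⁺`: digits with indices `≥ 1` (with convention `ξ_0 = 1`). -/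
def kPlus (ω : DSpace) (n : ℕ) : ℕ := kF ω (n : ℤ)

def xiPlus (ω : DSpace) (n : ℕ) : ℤ := if n = 0 then 1 else xiF ω (n : ℤ)

/-- The ECF convergent numerators `p_i(ω̂⁺)` of the forward point. -/
def pPlus (ω : DSpace) : ℕ → ℤ := cfP (kPlus ω) (xiPlus ω)

/-- The ECF convergent denominators `q_i(ω̂⁺)` of the forward point. -/
def qPlus (ω : DSpace) : ℕ → ℤ := cfQ (kPlus ω) (xiPlus ω)

/-- The `R`-denominators `q̂_n(ω̂⁺) = q_{ν_n}(ω̂⁺)` of the forward point. -/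
def qhatF (ω : DSpace) (n : ℕ) : ℤ :=
  if n = 0 then 1 else qPlus ω (nuF ω n).toNat

end
noncomputable section CFCore
namespace ECF

variable (k : ℤ → ℕ) (ξ : ℤ → ℤ)

/-- numerator continuants of `backCF`, unfolded from the top at index `i`. -/
def pC (i : ℤ) : ℕ → ℤ
  | 0 => 2 * (k i : ℤ)
  | 1 => 2 * (k (i-1) : ℤ) * (2 * (k i : ℤ)) + ξ (i-1)
  | (s+2) => 2 * (k (i - (s+2)) : ℤ) * pC i (s+1) + ξ (i - (s+2)) * pC i s

/-- denominator continuants. -/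
def qC (i : ℤ) : ℕ → ℤ
  | 0 => 1
  | 1 => 2 * (k (i-1) : ℤ)
  | (s+2) => 2 * (k (i - (s+2)) : ℤ) * qC i (s+1) + ξ (i - (s+2)) * qC i s

variable {k ξ}
variable (hk : ∀ i, 1 ≤ k i) (hξ : ∀ i, ξ i = 1 ∨ ξ i = -1)

section
include hk hξ

lemma xi_bd (i : ℤ) : -1 ≤ ξ i ∧ ξ i ≤ 1 := by rcases hξ i with h | h <;> simp [h]

lemma qC_pair (i : ℤ) : ∀ s, 1 ≤ qC k ξ i s ∧ qC k ξ i s + 1 ≤ qC k ξ i (s+1) := by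
  intro s
  induction s with
  | zero =>
    have := hk (i-1)
    constructor
    · simp [qC]
    · show (1:ℤ) + 1 ≤ 2 * (k (i-1) : ℤ)
      have : (1:ℤ) ≤ (k (i-1) : ℤ) := by exact_mod_cast hk (i-1)
      linarith
  | succ s ih =>
    obtain ⟨h1, h2⟩ := ih
    have h3 : 1 ≤ qC k ξ i (s+1) := by linarith
    refine ⟨h3, ?_⟩
    show qC k ξ i (s+1) + 1 ≤ qC k ξ i (s+2)
    have hrec : qC k ξ i (s+2) = 2 * (k (i - (s+2)) : ℤ) * qC k ξ i (s+1)
        + ξ (i - (s+2)) * qC k ξ i s := rfl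
    have hkk : (1:ℤ) ≤ (k (i - (s+2)) : ℤ) := by exact_mod_cast hk _
    obtain ⟨hb1, hb2⟩ := xi_bd hk hξ (i - (s+2))
    nlinarith
end

end ECF
end CFCore
noncomputable section CFCore2
namespace ECF
set_option linter.unusedSectionVars false

variable {k : ℤ → ℕ} {ξ : ℤ → ℤ}
variable (hk : ∀ i, 1 ≤ k i) (hξ : ∀ i, ξ i = 1 ∨ ξ i = -1)
include hk hξ

lemma qC_one_le (i : ℤ) (s : ℕ) : 1 ≤ qC k ξ i s := (qC_pair hk hξ i s).1

lemma qC_lt_succ (i : ℤ) (s : ℕ) : qC k ξ i s + 1 ≤ qC k ξ i (s+1) := (qC_pair hk hξ i s).2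

lemma qC_ge (i : ℤ) (s : ℕ) : (s:ℤ) + 1 ≤ qC k ξ i s := by
  induction s with
  | zero => simpa using qC_one_le hk hξ i 0
  | succ s ih => have := qC_lt_succ hk hξ i s; push_cast; push_cast at ih; linarith

lemma pq_pair (i : ℤ) : ∀ s, qC k ξ i s + 1 ≤ pC k ξ i s ∧
    pC k ξ i s - qC k ξ i s ≤ pC k ξ i (s+1) - qC k ξ i (s+1) := by
  intro s
  induction s with
  | zero =>
    have hk0 : (1:ℤ) ≤ (k i : ℤ) := by exact_mod_cast hk i
    have hk1 : (1:ℤ) ≤ (k (i-1) : ℤ) := by exact_mod_cast hk (i-1)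
    obtain ⟨hb1, hb2⟩ := xi_bd hk hξ (i-1)
    constructor
    · show (1:ℤ) + 1 ≤ 2 * (k i : ℤ); linarith
    · show 2 * (k i : ℤ) - 1 ≤ (2 * (k (i-1) : ℤ) * (2 * (k i : ℤ)) + ξ (i-1)) - 2 * (k (i-1) : ℤ)
      nlinarith
  | succ s ih =>
    obtain ⟨h1, h2⟩ := ih
    have hq1 : 1 ≤ qC k ξ i s := qC_one_le hk hξ i s
    have hq2 : 1 ≤ qC k ξ i (s+1) := qC_one_le hk hξ i (s+1)
    have h1' : qC k ξ i (s+1) + 1 ≤ pC k ξ i (s+1) := by linarith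
    refine ⟨h1', ?_⟩
    have hprec : pC k ξ i (s+2) = 2 * (k (i - (s+2)) : ℤ) * pC k ξ i (s+1)
        + ξ (i - (s+2)) * pC k ξ i s := rfl
    have hqrec : qC k ξ i (s+2) = 2 * (k (i - (s+2)) : ℤ) * qC k ξ i (s+1)
        + ξ (i - (s+2)) * qC k ξ i s := rfl
    have hkk : (1:ℤ) ≤ (k (i - (s+2)) : ℤ) := by exact_mod_cast hk _
    obtain ⟨hb1, hb2⟩ := xi_bd hk hξ (i - (s+2))
    nlinarith

lemma qC_lt_pC (i : ℤ) (s : ℕ) : qC k ξ i s + 1 ≤ pC k ξ i s := (pq_pair hk hξ i s).1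

omit hk hξ

lemma qC_shift (i : ℤ) : ∀ s, qC k ξ i (s+1) = pC k ξ (i-1) s ∧
    qC k ξ i (s+2) = pC k ξ (i-1) (s+1) := by
  intro s
  induction s with
  | zero =>
    constructor
    · rfl
    · show 2 * (k (i-2) : ℤ) * qC k ξ i 1 + ξ (i-2) * qC k ξ i 0
        = 2 * (k (i-1-1) : ℤ) * (2 * (k (i-1) : ℤ)) + ξ (i-1-1)
      have : i - 2 = i - 1 - 1 := by ring
      rw [this]
      show 2 * (k (i-1-1) : ℤ) * (2 * (k (i-1) : ℤ)) + ξ (i-1-1) * 1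
        = 2 * (k (i-1-1) : ℤ) * (2 * (k (i-1) : ℤ)) + ξ (i-1-1)
      ring
  | succ s ih =>
    obtain ⟨ih1, ih2⟩ := ih
    refine ⟨ih2, ?_⟩
    show 2 * (k (i - ((s:ℤ)+3)) : ℤ) * qC k ξ i (s+2) + ξ (i - ((s:ℤ)+3)) * qC k ξ i (s+1)
      = 2 * (k (i-1 - ((s:ℤ)+2)) : ℤ) * pC k ξ (i-1) (s+1) + ξ (i-1 - ((s:ℤ)+2)) * pC k ξ (i-1) s
    have he : i - ((s:ℤ)+3) = i - 1 - ((s:ℤ)+2) := by ring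
    rw [he, ih1, ih2]

lemma pC_shift (i : ℤ) : ∀ s, pC k ξ i (s+1)
      = 2 * (k i : ℤ) * pC k ξ (i-1) s + ξ (i-1) * qC k ξ (i-1) s ∧
    pC k ξ i (s+2) = 2 * (k i : ℤ) * pC k ξ (i-1) (s+1) + ξ (i-1) * qC k ξ (i-1) (s+1) := by
  intro s
  induction s with
  | zero =>
    constructor
    · show (2 * (k (i-1) : ℤ) * (2 * (k i : ℤ)) + ξ (i-1))
        = 2 * (k i : ℤ) * (2 * (k (i-1) : ℤ)) + ξ (i-1) * 1
      ring
    · show 2 * (k (i - 2) : ℤ) * pC k ξ i 1 + ξ (i - 2) * pC k ξ i 0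
        = 2 * (k i : ℤ) * pC k ξ (i-1) 1 + ξ (i-1) * qC k ξ (i-1) 1
      have he : i - 2 = i - 1 - 1 := by ring
      show 2 * (k (i - 2) : ℤ) * (2 * (k (i-1) : ℤ) * (2 * (k i : ℤ)) + ξ (i-1)) + ξ (i - 2) * (2 * (k i : ℤ))
        = 2 * (k i : ℤ) * (2 * (k (i-1-1) : ℤ) * (2 * (k (i-1) : ℤ)) + ξ (i-1-1)) + ξ (i-1) * (2 * (k (i-1-1) : ℤ))
      rw [← he]; ring
  | succ s ih =>
    obtain ⟨ih1, ih2⟩ := ih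
    refine ⟨ih2, ?_⟩
    show 2 * (k (i - ((s:ℤ)+3)) : ℤ) * pC k ξ i (s+2) + ξ (i - ((s:ℤ)+3)) * pC k ξ i (s+1)
      = 2 * (k i : ℤ) * pC k ξ (i-1) (s+2) + ξ (i-1) * qC k ξ (i-1) (s+2)
    have he : i - ((s:ℤ)+3) = i - 1 - ((s:ℤ)+2) := by ring
    have hp : pC k ξ (i-1) (s+2) = 2 * (k (i-1 - ((s:ℤ)+2)) : ℤ) * pC k ξ (i-1) (s+1)
        + ξ (i-1 - ((s:ℤ)+2)) * pC k ξ (i-1) s := by push_cast [pC]; ring_nf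
    have hq : qC k ξ (i-1) (s+2) = 2 * (k (i-1 - ((s:ℤ)+2)) : ℤ) * qC k ξ (i-1) (s+1)
        + ξ (i-1 - ((s:ℤ)+2)) * qC k ξ (i-1) s := by push_cast [qC]; ring_nf
    rw [he, ih1, ih2, hp, hq]; ring

end ECF
end CFCore2
noncomputable section CFCore3
namespace ECF
set_option linter.unusedSectionVars false

variable {k : ℤ → ℕ} {ξ : ℤ → ℤ}
variable (hk : ∀ i, 1 ≤ k i) (hξ : ∀ i, ξ i = 1 ∨ ξ i = -1)
include hk hξ

lemma qC_pos_real (i : ℤ) (s : ℕ) : (0:ℝ) < (qC k ξ i s : ℝ) := by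
  have := qC_one_le hk hξ i s
  exact_mod_cast lt_of_lt_of_le zero_lt_one (by exact_mod_cast this)

lemma pC_pos_real (i : ℤ) (s : ℕ) : (0:ℝ) < (pC k ξ i s : ℝ) := by
  have h1 := qC_one_le hk hξ i s
  have h2 := qC_lt_pC hk hξ i s
  exact_mod_cast lt_of_lt_of_le zero_lt_one (by exact_mod_cast (by linarith : (1:ℤ) ≤ pC k ξ i s))

lemma backCF_eq (s : ℕ) : ∀ i : ℤ, backCF k ξ s i = (pC k ξ i s : ℝ) / (qC k ξ i s : ℝ) := by
  induction s with
  | zero => intro i; simp [backCF, pC, qC]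
  | succ s ih =>
    intro i
    have hq : backCF k ξ (s+1) i = 2 * (k i : ℝ) + (ξ (i-1) : ℝ) / backCF k ξ s (i-1) := rfl
    rw [hq, ih (i-1)]
    have hp0 : (0:ℝ) < (pC k ξ (i-1) s : ℝ) := pC_pos_real hk hξ (i-1) s
    have hq0 : (0:ℝ) < (qC k ξ (i-1) s : ℝ) := qC_pos_real hk hξ (i-1) s
    have hps : pC k ξ i (s+1)
        = 2 * (k i : ℤ) * pC k ξ (i-1) s + ξ (i-1) * qC k ξ (i-1) s := (pC_shift i s).1
    have hqs : qC k ξ i (s+1) = pC k ξ (i-1) s := (qC_shift i s).1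
    rw [hps, hqs]
    field_simp
    try push_cast
    try ring

lemma backCF_ge_one (s : ℕ) (i : ℤ) : 1 ≤ backCF k ξ s i := by
  rw [backCF_eq hk hξ s i]
  rw [le_div_iff₀ (qC_pos_real hk hξ i s)]
  have := qC_lt_pC hk hξ i s
  have : (qC k ξ i s : ℝ) + 1 ≤ (pC k ξ i s : ℝ) := by exact_mod_cast this
  linarith

lemma detC (i : ℤ) (s : ℕ) :
    pC k ξ i (s+1) * qC k ξ i s - pC k ξ i s * qC k ξ i (s+1) = 1 ∨
    pC k ξ i (s+1) * qC k ξ i s - pC k ξ i s * qC k ξ i (s+1) = -1 := by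
  induction s with
  | zero =>
    have : pC k ξ i 1 * qC k ξ i 0 - pC k ξ i 0 * qC k ξ i 1 = ξ (i-1) := by
      show (2 * (k (i-1) : ℤ) * (2 * (k i : ℤ)) + ξ (i-1)) * 1
          - 2 * (k i : ℤ) * (2 * (k (i-1) : ℤ)) = ξ (i-1)
      ring
    rw [this]; exact hξ (i-1)
  | succ s ih =>
    have hps : pC k ξ i (s+2) = 2 * (k (i - ((s:ℤ)+2)) : ℤ) * pC k ξ i (s+1)
        + ξ (i - ((s:ℤ)+2)) * pC k ξ i s := by push_cast [pC]; ring_nf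
    have hqs : qC k ξ i (s+2) = 2 * (k (i - ((s:ℤ)+2)) : ℤ) * qC k ξ i (s+1)
        + ξ (i - ((s:ℤ)+2)) * qC k ξ i s := by push_cast [qC]; ring_nf
    have key : pC k ξ i (s+2) * qC k ξ i (s+1) - pC k ξ i (s+1) * qC k ξ i (s+2)
        = - (ξ (i - ((s:ℤ)+2)) * (pC k ξ i (s+1) * qC k ξ i s - pC k ξ i s * qC k ξ i (s+1))) := by
      rw [hps, hqs]; ring
    rcases hξ (i - ((s:ℤ)+2)) with h | h <;> rcases ih with h2 | h2 <;>
      rw [key, h, h2] <;> simp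
lemma consec_diff (i : ℤ) (s : ℕ) :
    |backCF k ξ (s+1) i - backCF k ξ s i|
      ≤ (qC k ξ i s : ℝ)⁻¹ - (qC k ξ i (s+1) : ℝ)⁻¹ := by
  rw [backCF_eq hk hξ (s+1) i, backCF_eq hk hξ s i]
  have hq0 : (0:ℝ) < (qC k ξ i s : ℝ) := qC_pos_real hk hξ i s
  have hq1 : (0:ℝ) < (qC k ξ i (s+1) : ℝ) := qC_pos_real hk hξ i (s+1)
  have hdq : (qC k ξ i s : ℝ) + 1 ≤ (qC k ξ i (s+1) : ℝ) := by
    exact_mod_cast qC_lt_succ hk hξ i s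
  have habs : |(pC k ξ i (s+1) : ℝ) * (qC k ξ i s : ℝ) - (pC k ξ i s : ℝ) * (qC k ξ i (s+1) : ℝ)| = 1 := by
    rcases detC hk hξ i s with h | h <;>
    · have : ((pC k ξ i (s+1) * qC k ξ i s - pC k ξ i s * qC k ξ i (s+1) : ℤ) : ℝ)
          = (pC k ξ i (s+1) : ℝ) * (qC k ξ i s : ℝ) - (pC k ξ i s : ℝ) * (qC k ξ i (s+1) : ℝ) := by
        push_cast; ring
      rw [← this, h] <;> simp
  have heq : (pC k ξ i (s+1) : ℝ) / (qC k ξ i (s+1) : ℝ) - (pC k ξ i s : ℝ) / (qC k ξ i s : ℝ)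
      = ((pC k ξ i (s+1) : ℝ) * (qC k ξ i s : ℝ) - (pC k ξ i s : ℝ) * (qC k ξ i (s+1) : ℝ))
        / ((qC k ξ i s : ℝ) * (qC k ξ i (s+1) : ℝ)) := by
    field_simp
  rw [heq, abs_div, habs, abs_of_pos (by positivity)]
  rw [div_le_iff₀ (by positivity)]
  have expand : ((qC k ξ i s : ℝ)⁻¹ - (qC k ξ i (s+1) : ℝ)⁻¹) * ((qC k ξ i s : ℝ) * (qC k ξ i (s+1) : ℝ))
      = (qC k ξ i (s+1) : ℝ) - (qC k ξ i s : ℝ) := by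
    field_simp
  rw [expand]; linarith

lemma diff_bound (i : ℤ) (n : ℕ) : ∀ m : ℕ, n ≤ m →
    |backCF k ξ m i - backCF k ξ n i| ≤ (qC k ξ i n : ℝ)⁻¹ - (qC k ξ i m : ℝ)⁻¹ := by
  intro m hm
  induction m, hm using Nat.le_induction with
  | base => simp
  | succ m hm ih =>
    have h1 := consec_diff hk hξ i m
    calc |backCF k ξ (m+1) i - backCF k ξ n i|
        ≤ |backCF k ξ (m+1) i - backCF k ξ m i| + |backCF k ξ m i - backCF k ξ n i| := by
          have := abs_sub_abs_le_abs_sub (backCF k ξ (m+1) i) (backCF k ξ m i)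
          exact abs_sub_le _ _ _
      _ ≤ ((qC k ξ i m : ℝ)⁻¹ - (qC k ξ i (m+1) : ℝ)⁻¹) + ((qC k ξ i n : ℝ)⁻¹ - (qC k ξ i m : ℝ)⁻¹) := by
          exact add_le_add h1 ih
      _ = (qC k ξ i n : ℝ)⁻¹ - (qC k ξ i (m+1) : ℝ)⁻¹ := by ring

lemma qC_inv_le (i : ℤ) (n : ℕ) : (qC k ξ i n : ℝ)⁻¹ ≤ ((n:ℝ)+1)⁻¹ := by
  have h1 : ((n:ℝ)+1) ≤ (qC k ξ i n : ℝ) := by exact_mod_cast qC_ge hk hξ i n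
  exact inv_anti₀ (by positivity) h1

lemma diff_bound' (i : ℤ) (n m : ℕ) (hm : n ≤ m) :
    |backCF k ξ m i - backCF k ξ n i| ≤ ((n:ℝ)+1)⁻¹ := by
  have := diff_bound hk hξ i n m hm
  have h2 := qC_inv_le hk hξ i n
  have h3 : (0:ℝ) ≤ (qC k ξ i m : ℝ)⁻¹ := inv_nonneg.mpr (le_of_lt (qC_pos_real hk hξ i m))
  linarith

lemma backCF_cauchy (i : ℤ) : CauchySeq (fun s => backCF k ξ s i) := by
  refine cauchySeq_of_le_tendsto_0 (fun N => 2 * ((N:ℝ)+1)⁻¹) ?_ ?_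
  · intro n m N hn hm
    have h1 := diff_bound' hk hξ i N n hn
    have h2 := diff_bound' hk hξ i N m hm
    rw [Real.dist_eq]
    have : backCF k ξ n i - backCF k ξ m i
        = (backCF k ξ n i - backCF k ξ N i) - (backCF k ξ m i - backCF k ξ N i) := by ring
    rw [this]
    calc |_ - _| ≤ |backCF k ξ n i - backCF k ξ N i| + |backCF k ξ m i - backCF k ξ N i| :=
          abs_sub _ _
      _ ≤ 2 * ((N:ℝ)+1)⁻¹ := by linarith
  · have : Filter.Tendsto (fun N : ℕ => ((N:ℝ)+1)⁻¹) Filter.atTop (nhds 0) :=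
      tendsto_one_div_add_atTop_nhds_zero_nat.congr (by intro n; rw [one_div])
    simpa using this.const_mul 2

lemma backCF_tendsto_limUnder (i : ℤ) :
    Filter.Tendsto (fun s => backCF k ξ s i) Filter.atTop
      (nhds (limUnder Filter.atTop (fun s => backCF k ξ s i))) := by
  obtain ⟨L, hL⟩ := cauchySeq_tendsto_of_complete (backCF_cauchy hk hξ i)
  rw [hL.limUnder_eq]; exact hL
end ECF
end CFCore3
noncomputable section OmegaStruct
namespace ECF

lemma nuF_zero (ω : DSpace) : nuF ω 0 = 1 := by simp [nuF]

lemma nuF_nonpos (ω : DSpace) (n : ℤ) (h : n ≤ 0) :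
    nuF ω n = 1 - ∑ j ∈ Finset.range (-n).toNat, ((hF ω (-(j : ℤ)) : ℤ) + 1) := by
  rcases eq_or_lt_of_le h with rfl | hneg
  · simp [nuF]
  · rw [nuF, if_neg (by omega)]

lemma nuF_succ (ω : DSpace) (n : ℤ) : nuF ω n = nuF ω (n-1) + ((hF ω n : ℤ) + 1) := by
  rcases le_or_gt 1 n with h | h
  · have h0 : (0:ℤ) ≤ n := by linarith
    have h0' : (0:ℤ) ≤ n - 1 := by linarith
    rw [nuF, nuF, if_pos h0, if_pos h0']
    have hnt : n.toNat = (n-1).toNat + 1 := by omega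
    rw [hnt, Finset.sum_Icc_succ_top (by omega : 1 ≤ (n-1).toNat + 1)]
    have hc : ((((n-1).toNat + 1 : ℕ)) : ℤ) = n := by omega
    rw [hc]; ring
  · have hle : n ≤ 0 := by omega
    rw [nuF_nonpos ω n hle, nuF_nonpos ω (n-1) (by omega)]
    have hnn : (-(n-1)).toNat = (-n).toNat + 1 := by omega
    rw [hnn, Finset.sum_range_succ]
    have hc : (-(((-n).toNat : ℕ) : ℤ)) = n := by omega
    rw [hc]; ring

lemma nuF_strictMono (ω : DSpace) : StrictMono (nuF ω) := by
  apply strictMono_int_of_lt_succ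
  intro n
  have h1 := nuF_succ ω (n+1)
  rw [(by ring : n + 1 - 1 = n)] at h1
  have hh : (0:ℤ) ≤ (hF ω (n+1) : ℤ) := Int.ofNat_nonneg _
  omega

lemma nuF_inj (ω : DSpace) : Function.Injective (nuF ω) := (nuF_strictMono ω).injective

lemma nuF_le_of_nonpos (ω : DSpace) (n : ℤ) (h : n ≤ 0) : nuF ω n ≤ 1 + n := by
  have key : ∀ m : ℕ, nuF ω (-(m:ℤ)) ≤ 1 - (m:ℤ) := by
    intro m
    induction m with
    | zero => simp [nuF_zero]
    | succ m ih =>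
      have hs := nuF_succ ω (-(m:ℤ))
      have hh : (0:ℤ) ≤ (hF ω (-(m:ℤ)) : ℤ) := Int.ofNat_nonneg _
      have : nuF ω (-(m:ℤ) - 1) ≤ nuF ω (-(m:ℤ)) - 1 := by omega
      have hc : -((m:ℤ)+1) = -(m:ℤ) - 1 := by ring
      push_cast
      rw [hc]
      omega
  have ⟨m, hm⟩ : ∃ m : ℕ, n = -(m:ℤ) := ⟨(-n).toNat, by omega⟩
  subst hm
  have := key m
  omega

lemma nuF_ge_of_nonneg (ω : DSpace) (n : ℤ) (h : 0 ≤ n) : 1 + n ≤ nuF ω n := by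
  have key : ∀ m : ℕ, 1 + (m:ℤ) ≤ nuF ω (m:ℤ) := by
    intro m
    induction m with
    | zero => simp [nuF_zero]
    | succ m ih =>
      have hs := nuF_succ ω ((m:ℤ)+1)
      rw [(by ring : (m:ℤ) + 1 - 1 = (m:ℤ))] at hs
      have hh : (0:ℤ) ≤ (hF ω ((m:ℤ)+1) : ℤ) := Int.ofNat_nonneg _
      push_cast
      omega
  have ⟨m, hm⟩ : ∃ m : ℕ, n = (m:ℤ) := ⟨n.toNat, by omega⟩
  subst hm
  exact key m

/-- digit at a block end -/
lemma kF_blockend (ω : DSpace) (n : ℤ) : kF ω (nuF ω n - 1) = mF ω n := by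
  have hex : ∃ n' : ℤ, nuF ω n' - 1 = nuF ω n - 1 := ⟨n, rfl⟩
  rw [kF, dif_pos hex]
  congr 1
  exact nuF_inj ω (by have := hex.choose_spec; omega)

lemma xiF_blockend (ω : DSpace) (n : ℤ) : xiF ω (nuF ω n - 1) = eF ω n := by
  have hex : ∃ n' : ℤ, nuF ω n' - 1 = nuF ω n - 1 := ⟨n, rfl⟩
  rw [xiF, dif_pos hex]
  congr 1
  exact nuF_inj ω (by have := hex.choose_spec; omega)

lemma kF_inner (ω : DSpace) (i : ℤ) (h : ¬ ∃ n : ℤ, nuF ω n - 1 = i) : kF ω i = 1 := by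
  rw [kF, dif_neg h]

lemma xiF_inner (ω : DSpace) (i : ℤ) (h : ¬ ∃ n : ℤ, nuF ω n - 1 = i) : xiF ω i = -1 := by
  rw [xiF, dif_neg h]

lemma mF_pos (ω : DSpace) (n : ℤ) : 1 ≤ mF ω n := (ω.2 n).1

lemma eF_pm (ω : DSpace) (n : ℤ) : eF ω n = 1 ∨ eF ω n = -1 := (ω.2 n).2.1

lemma me_ne (ω : DSpace) (n : ℤ) : ¬ (mF ω n = 1 ∧ eF ω n = -1) := (ω.2 n).2.2

lemma kF_pos (ω : DSpace) (i : ℤ) : 1 ≤ kF ω i := by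
  by_cases h : ∃ n : ℤ, nuF ω n - 1 = i
  · obtain ⟨n, hn⟩ := h; rw [← hn, kF_blockend]; exact mF_pos ω n
  · rw [kF_inner ω i h]

lemma xiF_pm (ω : DSpace) (i : ℤ) : xiF ω i = 1 ∨ xiF ω i = -1 := by
  by_cases h : ∃ n : ℤ, nuF ω n - 1 = i
  · obtain ⟨n, hn⟩ := h; rw [← hn, xiF_blockend]; exact eF_pm ω n
  · rw [xiF_inner ω i h]; right; rfl

/-- Below every index there is a non-(1,-1) digit. -/
lemma exists_good_below (ω : DSpace) (i : ℤ) :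
    ∃ j : ℤ, j ≤ i - 1 ∧ ¬ (kF ω j = 1 ∧ xiF ω j = -1) := by
  set n := min (i - 1) 0 with hn
  have h1 : nuF ω n ≤ 1 + n := nuF_le_of_nonpos ω n (by omega)
  refine ⟨nuF ω n - 1, by omega, ?_⟩
  rw [kF_blockend, xiF_blockend]
  intro ⟨hm, he⟩
  exact me_ne ω n ⟨hm, he⟩

end ECF
end OmegaStruct
noncomputable section CFGap
namespace ECF
set_option linter.unusedSectionVars false

variable {k : ℤ → ℕ} {ξ : ℤ → ℤ}
variable (hk : ∀ i, 1 ≤ k i) (hξ : ∀ i, ξ i = 1 ∨ ξ i = -1)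
include hk hξ

lemma pq_gap (i : ℤ) (s : ℕ) (hs : 1 ≤ s)
    (hsp : ¬ (k (i - (s:ℤ)) = 1 ∧ ξ (i - (s:ℤ)) = -1)) :
    qC k ξ i s + 2 ≤ pC k ξ i s := by
  have hsp' : 2 ≤ k (i - (s:ℤ)) ∨ ξ (i - (s:ℤ)) = 1 := by
    rcases hξ (i - (s:ℤ)) with h | h
    · right; exact h
    · left; have := hk (i - (s:ℤ)); omega
  match s, hs with
  | 1, _ =>
    have h1 : (1:ℤ) ≤ (k i : ℤ) := by exact_mod_cast hk i
    have h2 : (1:ℤ) ≤ (k (i-1) : ℤ) := by exact_mod_cast hk (i-1)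
    show 2 * (k (i-1) : ℤ) + 2 ≤ 2 * (k (i-1) : ℤ) * (2 * (k i : ℤ)) + ξ (i-1)
    have hc : i - ((1:ℕ):ℤ) = i - 1 := by norm_num
    rw [hc] at hsp'
    rcases hsp' with h | h
    · have h2' : (2:ℤ) ≤ (k (i-1) : ℤ) := by exact_mod_cast h
      obtain ⟨hb1, hb2⟩ := xi_bd hk hξ (i-1)
      nlinarith
    · rw [h]; nlinarith
  | (t+2), _ =>
    have hps : pC k ξ i (t+2) = 2 * (k (i - ((t:ℤ)+2)) : ℤ) * pC k ξ i (t+1)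
        + ξ (i - ((t:ℤ)+2)) * pC k ξ i t := by push_cast [pC]; ring_nf
    have hqs : qC k ξ i (t+2) = 2 * (k (i - ((t:ℤ)+2)) : ℤ) * qC k ξ i (t+1)
        + ξ (i - ((t:ℤ)+2)) * qC k ξ i t := by push_cast [qC]; ring_nf
    obtain ⟨he1, he2⟩ := pq_pair hk hξ i t
    have hq1 : 1 ≤ qC k ξ i t := qC_one_le hk hξ i t
    have hq2 : 1 ≤ qC k ξ i (t+1) := qC_one_le hk hξ i (t+1)
    have hc : i - (((t+2:ℕ)):ℤ) = i - ((t:ℤ)+2) := by push_cast; ring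
    rw [hc] at hsp'
    rcases hsp' with h | h
    · have h2' : (2:ℤ) ≤ (k (i - ((t:ℤ)+2)) : ℤ) := by exact_mod_cast h
      rw [hps, hqs]
      obtain ⟨hb1, hb2⟩ := xi_bd hk hξ (i - ((t:ℤ)+2))
      nlinarith
    · rw [hps, hqs, h]
      have h1 : (1:ℤ) ≤ (k (i - ((t:ℤ)+2)) : ℤ) := by exact_mod_cast hk _
      nlinarith

end ECF
end CFGap

noncomputable section YLemmas
namespace ECF

lemma yF_tendsto (ω : DSpace) (i : ℤ) :
    Filter.Tendsto (fun s => backCF (kF ω) (xiF ω) s i) Filter.atTop (nhds (yF ω i)) :=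
  backCF_tendsto_limUnder (kF_pos ω) (xiF_pm ω) i

lemma yF_ge_one (ω : DSpace) (i : ℤ) : 1 ≤ yF ω i :=
  ge_of_tendsto (yF_tendsto ω i)
    (Filter.Eventually.of_forall (fun s => backCF_ge_one (kF_pos ω) (xiF_pm ω) s i))

lemma yF_pos (ω : DSpace) (i : ℤ) : 0 < yF ω i := lt_of_lt_of_le zero_lt_one (yF_ge_one ω i)

lemma yF_ne_zero (ω : DSpace) (i : ℤ) : yF ω i ≠ 0 := ne_of_gt (yF_pos ω i)

lemma yF_dist (ω : DSpace) (i : ℤ) (s : ℕ) :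
    |yF ω i - backCF (kF ω) (xiF ω) s i| ≤ (qC (kF ω) (xiF ω) i s : ℝ)⁻¹ := by
  have hk := kF_pos ω; have hξ := xiF_pm ω
  have htd : Filter.Tendsto (fun m => |backCF (kF ω) (xiF ω) m i - backCF (kF ω) (xiF ω) s i|)
      Filter.atTop (nhds (|yF ω i - backCF (kF ω) (xiF ω) s i|)) :=
    ((yF_tendsto ω i).sub tendsto_const_nhds).abs
  refine le_of_tendsto htd ?_
  filter_upwards [Filter.eventually_ge_atTop s] with m hm
  have h1 := diff_bound hk hξ i s m hm
  have h2 : (0:ℝ) ≤ (qC (kF ω) (xiF ω) i m : ℝ)⁻¹ :=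
    inv_nonneg.mpr (le_of_lt (qC_pos_real hk hξ i m))
  linarith

lemma yF_gt_one (ω : DSpace) (i : ℤ) : 1 < yF ω i := by
  have hk := kF_pos ω; have hξ := xiF_pm ω
  obtain ⟨j, hj, hgood⟩ := exists_good_below ω i
  set s : ℕ := (i - j).toNat with hs
  have hs1 : 1 ≤ s := by omega
  have hij : i - (s:ℤ) = j := by omega
  have hgap : qC (kF ω) (xiF ω) i s + 2 ≤ pC (kF ω) (xiF ω) i s := by
    apply pq_gap hk hξ i s hs1
    rw [hij]; exact hgood
  have hdist := yF_dist ω i s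
  rw [backCF_eq hk hξ s i] at hdist
  have hq0 : (0:ℝ) < (qC (kF ω) (xiF ω) i s : ℝ) := qC_pos_real hk hξ i s
  have hgap' : (qC (kF ω) (xiF ω) i s : ℝ) + 2 ≤ (pC (kF ω) (xiF ω) i s : ℝ) := by
    exact_mod_cast hgap
  have h1 : (pC (kF ω) (xiF ω) i s : ℝ) / (qC (kF ω) (xiF ω) i s : ℝ)
      - (qC (kF ω) (xiF ω) i s : ℝ)⁻¹ ≤ yF ω i := by
    have := abs_le.mp hdist
    linarith [this.1]
  have h2 : 1 < (pC (kF ω) (xiF ω) i s : ℝ) / (qC (kF ω) (xiF ω) i s : ℝ)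
      - (qC (kF ω) (xiF ω) i s : ℝ)⁻¹ := by
    rw [div_sub' (ne_of_gt hq0)]
    · rw [lt_div_iff₀ hq0]
      have hxq : (qC (kF ω) (xiF ω) i s : ℝ)⁻¹ * (qC (kF ω) (xiF ω) i s : ℝ) = 1 := by
        field_simp
      nlinarith
  linarith

lemma yF_rec (ω : DSpace) (i : ℤ) :
    yF ω i = 2 * (kF ω i : ℝ) + (xiF ω (i-1) : ℝ) / yF ω (i-1) := by
  have t1 : Filter.Tendsto (fun r => backCF (kF ω) (xiF ω) (r+1) i) Filter.atTop
      (nhds (yF ω i)) := (yF_tendsto ω i).comp (Filter.tendsto_add_atTop_nat 1)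
  have t2 : Filter.Tendsto (fun r => 2 * (kF ω i : ℝ) + (xiF ω (i-1) : ℝ) / backCF (kF ω) (xiF ω) r (i-1))
      Filter.atTop (nhds (2 * (kF ω i : ℝ) + (xiF ω (i-1) : ℝ) / yF ω (i-1))) := by
    apply Filter.Tendsto.const_add
    exact (tendsto_const_nhds.div (yF_tendsto ω (i-1)) (yF_ne_zero ω (i-1)))
  have heq : (fun r => backCF (kF ω) (xiF ω) (r+1) i)
      = fun r => 2 * (kF ω i : ℝ) + (xiF ω (i-1) : ℝ) / backCF (kF ω) (xiF ω) r (i-1) := rfl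
  rw [heq] at t1
  exact tendsto_nhds_unique t1 t2

end ECF
end YLemmas
noncomputable section ShiftLemmas
namespace ECF

lemma int_ext (f g : ℤ → ℤ) (h0 : f 0 = g 0)
    (hstep : ∀ n : ℤ, f n - f (n-1) = g n - g (n-1)) : ∀ n, f n = g n := by
  intro n
  induction n using Int.induction_on with
  | zero => exact h0
  | succ i ih =>
    have := hstep ((i:ℤ)+1)
    rw [(by ring : (i:ℤ) + 1 - 1 = (i:ℤ))] at this
    omega
  | pred i ih =>
    have hst := hstep (-(i:ℤ))
    omega

lemma hF_shift (ω : DSpace) (j : ℤ) : hF (shiftD ω) j = hF ω (j+1) := rfl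
lemma mF_shift (ω : DSpace) (j : ℤ) : mF (shiftD ω) j = mF ω (j+1) := rfl
lemma eF_shift (ω : DSpace) (j : ℤ) : eF (shiftD ω) j = eF ω (j+1) := rfl

lemma nuF_shift (ω : DSpace) (n : ℤ) :
    nuF (shiftD ω) n = nuF ω (n+1) - (nuF ω 1 - 1) := by
  refine int_ext (fun n => nuF (shiftD ω) n) (fun n => nuF ω (n+1) - (nuF ω 1 - 1)) ?_ ?_ n
  · simp only [nuF_zero, zero_add]; ring
  · intro n
    have h1 := nuF_succ (shiftD ω) n
    have h2 := nuF_succ ω (n+1)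
    rw [(by ring : n + 1 - 1 = (n - 1) + 1)] at h2
    rw [hF_shift] at h1
    omega

lemma blockend_iff_shift (ω : DSpace) (i : ℤ) :
    (∃ n : ℤ, nuF (shiftD ω) n - 1 = i) ↔ (∃ n : ℤ, nuF ω n - 1 = i + (nuF ω 1 - 1)) := by
  constructor
  · rintro ⟨n, hn⟩
    exact ⟨n + 1, by rw [← hn, nuF_shift]; ring⟩
  · rintro ⟨n, hn⟩
    refine ⟨n - 1, ?_⟩
    rw [nuF_shift, (by ring : n - 1 + 1 = n)]
    omega

lemma kF_shift (ω : DSpace) (i : ℤ) : kF (shiftD ω) i = kF ω (i + (nuF ω 1 - 1)) := by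
  by_cases h : ∃ n : ℤ, nuF (shiftD ω) n - 1 = i
  · obtain ⟨n, hn⟩ := h
    subst hn
    have hn' : nuF ω (n+1) - 1 = nuF (shiftD ω) n - 1 + (nuF ω 1 - 1) := by
      rw [nuF_shift]; ring
    rw [← hn', kF_blockend, kF_blockend, mF_shift]
  · have h' : ¬ ∃ n : ℤ, nuF ω n - 1 = i + (nuF ω 1 - 1) := by
      rw [← blockend_iff_shift]; exact h
    rw [kF_inner _ _ h, kF_inner _ _ h']

lemma xiF_shift (ω : DSpace) (i : ℤ) : xiF (shiftD ω) i = xiF ω (i + (nuF ω 1 - 1)) := by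
  by_cases h : ∃ n : ℤ, nuF (shiftD ω) n - 1 = i
  · obtain ⟨n, hn⟩ := h
    subst hn
    have hn' : nuF ω (n+1) - 1 = nuF (shiftD ω) n - 1 + (nuF ω 1 - 1) := by
      rw [nuF_shift]; ring
    rw [← hn', xiF_blockend, xiF_blockend, eF_shift]
  · have h' : ¬ ∃ n : ℤ, nuF ω n - 1 = i + (nuF ω 1 - 1) := by
      rw [← blockend_iff_shift]; exact h
    rw [xiF_inner _ _ h, xiF_inner _ _ h']

lemma nuF_shift_iter (ω : DSpace) (j : ℕ) (n : ℤ) :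
    nuF (shiftD^[j] ω) n = nuF ω (n + j) - (nuF ω j - 1) := by
  induction j generalizing ω with
  | zero => simp [nuF_zero]
  | succ j ih =>
    rw [Function.iterate_succ_apply, ih (shiftD ω), nuF_shift, nuF_shift]
    push_cast
    rw [(by ring : n + ((j:ℤ) + 1) = n + (j:ℤ) + 1)]
    omega

lemma kF_shift_iter (ω : DSpace) (j : ℕ) (i : ℤ) :
    kF (shiftD^[j] ω) i = kF ω (i + (nuF ω j - 1)) := by
  induction j generalizing ω with
  | zero => simp [nuF_zero]
  | succ j ih =>
    rw [Function.iterate_succ_apply, ih (shiftD ω), kF_shift, nuF_shift]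
    congr 1
    push_cast
    ring

lemma xiF_shift_iter (ω : DSpace) (j : ℕ) (i : ℤ) :
    xiF (shiftD^[j] ω) i = xiF ω (i + (nuF ω j - 1)) := by
  induction j generalizing ω with
  | zero => simp [nuF_zero]
  | succ j ih =>
    rw [Function.iterate_succ_apply, ih (shiftD ω), xiF_shift, nuF_shift]
    congr 1
    push_cast
    ring

lemma backCF_shiftc (k k' : ℤ → ℕ) (ξ ξ' : ℤ → ℤ) (c : ℤ)
    (hkc : ∀ t, k' t = k (t + c)) (hξc : ∀ t, ξ' t = ξ (t + c)) :
    ∀ (r : ℕ) (i : ℤ), backCF k' ξ' r i = backCF k ξ r (i + c) := by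
  intro r
  induction r with
  | zero => intro i; simp [backCF, hkc]
  | succ r ih =>
    intro i
    show 2 * (k' i : ℝ) + (ξ' (i-1) : ℝ) / backCF k' ξ' r (i-1)
      = 2 * (k (i+c) : ℝ) + (ξ (i+c-1) : ℝ) / backCF k ξ r (i+c-1)
    rw [hkc, hξc, ih (i-1), (by ring : i - 1 + c = i + c - 1)]

lemma yF_shift_iter (ω : DSpace) (j : ℕ) (i : ℤ) :
    yF (shiftD^[j] ω) i = yF ω (i + (nuF ω j - 1)) := by
  unfold yF
  congr 1
  funext r
  exact backCF_shiftc (kF ω) (kF (shiftD^[j] ω)) (xiF ω) (xiF (shiftD^[j] ω))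
    (nuF ω j - 1) (kF_shift_iter ω j) (xiF_shift_iter ω j) r i

end ECF
end ShiftLemmas
noncomputable section Telescope
namespace ECF

lemma psiF_shift (ω : DSpace) (j : ℕ) :
    psiF (shiftD^[j] ω) = ∑ t ∈ Finset.Ioc (nuF ω (j:ℤ)) (nuF ω ((j:ℤ)+1)), Real.log (yF ω t) := by
  unfold psiF
  have hnu : nuF (shiftD^[j] ω) 1 = nuF ω ((j:ℤ)+1) - (nuF ω (j:ℤ) - 1) := by
    rw [nuF_shift_iter, (by ring : (1:ℤ) + (j:ℤ) = (j:ℤ) + 1)]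
  rw [hnu]
  set c := nuF ω (j:ℤ) - 1 with hc
  have step1 : ∑ i ∈ Finset.Icc (2:ℤ) (nuF ω ((j:ℤ)+1) - c), Real.log (yF (shiftD^[j] ω) i)
      = ∑ i ∈ Finset.Icc (2:ℤ) (nuF ω ((j:ℤ)+1) - c), Real.log (yF ω (i + c)) :=
    Finset.sum_congr rfl (fun i _ => by rw [yF_shift_iter])
  rw [step1]
  have step2 : ∑ i ∈ Finset.Icc (2:ℤ) (nuF ω ((j:ℤ)+1) - c), Real.log (yF ω (i + c))
      = ∑ t ∈ Finset.Icc (2 + c) (nuF ω ((j:ℤ)+1)), Real.log (yF ω t) := by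
    have hmap : Finset.Icc (2 + c) (nuF ω ((j:ℤ)+1))
        = (Finset.Icc (2:ℤ) (nuF ω ((j:ℤ)+1) - c)).map (addRightEmbedding c) := by
      rw [Finset.map_add_right_Icc]
      congr 1
      ring
    rw [hmap, Finset.sum_map]
    simp only [addRightEmbedding_apply]
  rw [step2]
  congr 1
  ext t
  simp only [Finset.mem_Icc, Finset.mem_Ioc]
  omega

lemma birkhoff_eq (ω : DSpace) (n : ℕ) :
    birkhoffPsi ω n = ∑ t ∈ Finset.Ioc (1:ℤ) (nuF ω (n:ℤ)), Real.log (yF ω t) := by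
  induction n with
  | zero => simp [birkhoffPsi, nuF_zero]
  | succ n ih =>
    rw [birkhoffPsi, Finset.sum_range_succ, ← birkhoffPsi, ih, psiF_shift]
    have h1 : (1:ℤ) ≤ nuF ω (n:ℤ) := by
      have := nuF_ge_of_nonneg ω (n:ℤ) (Int.ofNat_nonneg n); omega
    have h2 : nuF ω (n:ℤ) ≤ nuF ω ((n:ℤ)+1) :=
      le_of_lt ((nuF_strictMono ω) (by omega))
    have hdisj : Disjoint (Finset.Ioc (1:ℤ) (nuF ω (n:ℤ)))
        (Finset.Ioc (nuF ω (n:ℤ)) (nuF ω ((n:ℤ)+1))) := by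
      rw [Finset.disjoint_left]
      intro a ha hb
      simp only [Finset.mem_Ioc] at ha hb
      omega
    push_cast
    rw [← Finset.sum_union hdisj, Finset.Ioc_union_Ioc_eq_Ioc h1 h2]

end ECF
end Telescope
noncomputable section Final
namespace ECF

lemma chainA (ω : DSpace) : ∀ j : ℕ,
    (0 < (qPlus ω j : ℝ) + (pPlus ω j : ℝ) * (yF ω 1 - 2 * (kF ω 1 : ℝ))) ∧
    ((qPlus ω (j+1) : ℝ) + (pPlus ω (j+1) : ℝ) * (yF ω 1 - 2 * (kF ω 1 : ℝ)))
      = ((qPlus ω j : ℝ) + (pPlus ω j : ℝ) * (yF ω 1 - 2 * (kF ω 1 : ℝ))) * yF ω ((j:ℤ)+1) := by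
  set x : ℝ := yF ω 1 - 2 * (kF ω 1 : ℝ) with hx
  intro j
  induction j with
  | zero =>
    have h0q : qPlus ω 0 = 1 := rfl
    have h0p : pPlus ω 0 = 0 := rfl
    have h1q : qPlus ω 1 = 2 * (kPlus ω 1 : ℤ) := rfl
    have h1p : pPlus ω 1 = xiPlus ω 0 := rfl
    have hxi0 : xiPlus ω 0 = 1 := rfl
    have hk1 : kPlus ω 1 = kF ω 1 := by unfold kPlus; norm_num
    constructor
    · rw [h0q, h0p]; norm_num
    · rw [h0q, h0p, h1q, h1p, hxi0, hk1]
      push_cast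
      show 2 * (kF ω 1 : ℝ) + 1 * x = (1 + 0 * x) * yF ω (0+1)
      rw [hx]
      norm_num
  | succ j ih =>
    obtain ⟨hpos, heq⟩ := ih
    have hy1 : yF ω ((j:ℤ)+1) ≠ 0 := yF_ne_zero ω _
    have hA1pos : 0 < (qPlus ω (j+1) : ℝ) + (pPlus ω (j+1) : ℝ) * x := by
      rw [heq]; exact mul_pos hpos (yF_pos ω _)
    refine ⟨hA1pos, ?_⟩
    have e1 : kPlus ω (j+2) = kF ω ((j:ℤ)+2) := by
      unfold kPlus; congr 1
    have e2 : xiPlus ω (j+1) = xiF ω ((j:ℤ)+1) := by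
      rw [xiPlus, if_neg (Nat.succ_ne_zero j)]; congr 1
    have hq : qPlus ω (j+2) = 2 * (kF ω ((j:ℤ)+2) : ℤ) * qPlus ω (j+1)
        + xiF ω ((j:ℤ)+1) * qPlus ω j := by
      rw [show qPlus ω (j+2) = 2 * (kPlus ω (j+2) : ℤ) * qPlus ω (j+1)
        + xiPlus ω (j+1) * qPlus ω j from rfl, e1, e2]
    have hp : pPlus ω (j+2) = 2 * (kF ω ((j:ℤ)+2) : ℤ) * pPlus ω (j+1)
        + xiF ω ((j:ℤ)+1) * pPlus ω j := by
      rw [show pPlus ω (j+2) = 2 * (kPlus ω (j+2) : ℤ) * pPlus ω (j+1)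
        + xiPlus ω (j+1) * pPlus ω j from rfl, e1, e2]
    have hqR : (qPlus ω (j+2) : ℝ) = 2 * (kF ω ((j:ℤ)+2) : ℝ) * (qPlus ω (j+1) : ℝ)
        + (xiF ω ((j:ℤ)+1) : ℝ) * (qPlus ω j : ℝ) := by rw [hq]; push_cast; ring
    have hpR : (pPlus ω (j+2) : ℝ) = 2 * (kF ω ((j:ℤ)+2) : ℝ) * (pPlus ω (j+1) : ℝ)
        + (xiF ω ((j:ℤ)+1) : ℝ) * (pPlus ω j : ℝ) := by rw [hp]; push_cast; ring
    have hrec := yF_rec ω ((j:ℤ)+2)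
    rw [show ((j:ℤ)+2-1) = (j:ℤ)+1 from by ring] at hrec
    have hcast : ((j+1 : ℕ) : ℤ) + 1 = (j:ℤ) + 2 := by push_cast; ring
    rw [hcast, hqR, hpR, hrec]
    have hdiv : ((qPlus ω (j+1):ℝ) + (pPlus ω (j+1):ℝ) * x) / yF ω ((j:ℤ)+1)
        = (qPlus ω j : ℝ) + (pPlus ω j : ℝ) * x := by
      rw [heq, mul_div_assoc, div_self hy1, mul_one]
    have expandR : ((qPlus ω (j+1):ℝ) + (pPlus ω (j+1):ℝ) * x)
          * (2 * (kF ω ((j:ℤ)+2) : ℝ) + (xiF ω ((j:ℤ)+1) : ℝ) / yF ω ((j:ℤ)+1))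
        = 2 * (kF ω ((j:ℤ)+2) : ℝ) * ((qPlus ω (j+1):ℝ) + (pPlus ω (j+1):ℝ) * x)
          + (xiF ω ((j:ℤ)+1) : ℝ)
            * (((qPlus ω (j+1):ℝ) + (pPlus ω (j+1):ℝ) * x) / yF ω ((j:ℤ)+1)) := by
      field_simp
    rw [expandR, hdiv]
    ring

lemma sum_log (ω : DSpace) : ∀ N : ℕ, 1 ≤ N →
    ∑ t ∈ Finset.Ioc (1:ℤ) (N:ℤ), Real.log (yF ω t)
      = Real.log ((qPlus ω N : ℝ) + (pPlus ω N : ℝ) * (yF ω 1 - 2 * (kF ω 1 : ℝ)))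
        - Real.log ((qPlus ω 1 : ℝ) + (pPlus ω 1 : ℝ) * (yF ω 1 - 2 * (kF ω 1 : ℝ))) := by
  set x : ℝ := yF ω 1 - 2 * (kF ω 1 : ℝ) with hx
  intro N hN
  induction N, hN using Nat.le_induction with
  | base => simp
  | succ N hN ih =>
    have hsplit : Finset.Ioc (1:ℤ) ((N+1 : ℕ):ℤ)
        = Finset.Ioc (1:ℤ) (N:ℤ) ∪ {(N:ℤ)+1} := by
      ext t
      simp only [Finset.mem_Ioc, Finset.mem_union, Finset.mem_singleton]
      omega
    have hdisj : Disjoint (Finset.Ioc (1:ℤ) (N:ℤ)) ({(N:ℤ)+1} : Finset ℤ) := by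
      rw [Finset.disjoint_left]
      intro a ha hb
      simp only [Finset.mem_Ioc] at ha
      simp only [Finset.mem_singleton] at hb
      omega
    rw [hsplit, Finset.sum_union hdisj, ih, Finset.sum_singleton]
    obtain ⟨hposN, heqN⟩ := chainA ω N
    obtain ⟨hposN1, _⟩ := chainA ω (N+1)
    rw [heqN, Real.log_mul (ne_of_gt hposN) (yF_ne_zero ω _)]
    ring

lemma x_mem (ω : DSpace) : yF ω 1 - 2 * (kF ω 1 : ℝ) ∈ Set.Ioc (-(1/3) : ℝ) 1 := by
  have hrec1 := yF_rec ω 1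
  rw [show (1:ℤ) - 1 = 0 from by ring] at hrec1
  have hx : yF ω 1 - 2 * (kF ω 1 : ℝ) = (xiF ω 0 : ℝ) / yF ω 0 := by rw [hrec1]; ring
  have hy0 : 1 < yF ω 0 := yF_gt_one ω 0
  have hy0' : 0 < yF ω 0 := by linarith
  rcases xiF_pm ω 0 with h | h
  · rw [hx, h]
    constructor
    · push_cast
      have : 0 < 1 / yF ω 0 := by positivity
      linarith
    · push_cast
      rw [div_le_one hy0']
      linarith
  · -- ξ₀ = -1, so k₀ = m₀ ≥ 2
    have hbe : nuF ω 0 - 1 = 0 := by rw [nuF_zero]; ring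
    have hk0 : kF ω 0 = mF ω 0 := by
      have h' := kF_blockend ω 0
      rw [hbe] at h'
      exact h'
    have hxi0 : xiF ω 0 = eF ω 0 := by
      have h' := xiF_blockend ω 0
      rw [hbe] at h'
      exact h'
    have hm2 : 2 ≤ mF ω 0 := by
      have h1 := mF_pos ω 0
      have h2 := me_ne ω 0
      have he : eF ω 0 = -1 := by rw [← hxi0]; exact h
      rcases Nat.lt_or_ge (mF ω 0) 2 with hlt | hge
      · exact absurd ⟨by omega, he⟩ h2
      · exact hge
    have hk2 : (2:ℝ) ≤ (kF ω 0 : ℝ) := by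
      rw [hk0]; exact_mod_cast hm2
    have hrec0 := yF_rec ω 0
    rw [show (0:ℤ) - 1 = -1 from by ring] at hrec0
    have hym : 1 < yF ω (-1) := yF_gt_one ω (-1)
    have hbd : -1 < (xiF ω (-1) : ℝ) / yF ω (-1) := by
      rcases xiF_pm ω (-1) with h' | h' <;> rw [h']
      · push_cast
        have h0 : (0:ℝ) < yF ω (-1) := by linarith
        have h1 : 0 < 1 / yF ω (-1) := by positivity
        linarith
      · push_cast
        rw [neg_div, neg_lt_neg_iff, div_lt_one (by linarith)]
        linarith
    have hy3 : 3 < yF ω 0 := by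
      rw [hrec0]; nlinarith
    rw [hx, h]
    constructor
    · push_cast
      rw [neg_div, neg_lt_neg_iff, div_lt_iff₀ (by linarith)]
      nlinarith
    · push_cast
      have : 0 < 1 / yF ω 0 := by positivity
      nlinarith [neg_div (yF ω 0) (1:ℝ)]

end ECF
end Final

/-- Closed form for the Birkhoff sums of the roof function:
`S_n(ψ)(ω̂) = log((q_{ν_n} + p_{ν_n}·x)/(2k₁ + x))`, where `x = y₁(ω̂) − 2k₁(ω̂)`
is the backward value of `ω̂`, which lies in `(−1/3, 1]`. -/
theorem birkhoff_sum_closed_form :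
    ∀ ω : DSpace, ∀ n : ℕ, 1 ≤ n →
      yF ω 1 - 2 * (kF ω 1 : ℝ) ∈ Set.Ioc (-(1/3) : ℝ) 1 ∧
      birkhoffPsi ω n =
        Real.log (((qPlus ω (nuF ω n).toNat : ℝ) +
            (pPlus ω (nuF ω n).toNat : ℝ) * (yF ω 1 - 2 * (kF ω 1 : ℝ))) /
          (2 * (kF ω 1 : ℝ) + (yF ω 1 - 2 * (kF ω 1 : ℝ)))) := by
  intro ω n hn
  refine ⟨ECF.x_mem ω, ?_⟩
  set x : ℝ := yF ω 1 - 2 * (kF ω 1 : ℝ) with hx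
  set N : ℕ := (nuF ω n).toNat with hNdef
  have hnu_pos : 1 ≤ nuF ω (n:ℤ) := by
    have := ECF.nuF_ge_of_nonneg ω (n:ℤ) (Int.ofNat_nonneg n)
    omega
  have hN : ((N : ℕ) : ℤ) = nuF ω (n:ℤ) := Int.toNat_of_nonneg (by omega)
  have h1N : 1 ≤ N := by omega
  rw [ECF.birkhoff_eq ω n, ← hN, ECF.sum_log ω N h1N]
  have hA1 : (qPlus ω 1 : ℝ) + (pPlus ω 1 : ℝ) * x = 2 * (kF ω 1 : ℝ) + x := by
    have h1q : qPlus ω 1 = 2 * (kPlus ω 1 : ℤ) := rfl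
    have h1p : pPlus ω 1 = 1 := rfl
    have hk1 : kPlus ω 1 = kF ω 1 := by unfold kPlus; congr 1
    rw [h1q, h1p, hk1]
    push_cast
    ring
  have hANpos := (ECF.chainA ω N).1
  have hA1pos := (ECF.chainA ω 1).1
  rw [Real.log_div (ne_of_gt hANpos) (ne_of_gt (by rw [hA1] at hA1pos; exact hA1pos)), hA1]
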